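/- arXiv:1801.01149 — 5 statements merged into one kernel-verified Lean document; each statement's English description precedes it below -/
import Mathlib

section
/- Let G be a graph with adjacency matrix A over GF(2), and let G_X be obtained from G by Seidel switching with respect to X, the neighborhood of a vertex x. If the all-ones vector 1 lies in the column space of A over GF(2), then the 2-rank of G_X equals the 2-rank of G minus 2; otherwise the 2-rank of G_X equals the 2-rank of G. -/
open Matrix LinearMap Module

private lemma zmod2_add_self (a : ZMod 2) : a + a = 0 := by revert a; decide

private lemma zmod2_cases (a : ZMod 2) : a = 0 ∨ a = 1 := by revert a; decide

private lemma zmod2_eq_one (a : ZMod 2) (h : a + 1 = 0) : a = 1 := by revert a; decide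

private lemma hpair_lemma {V : Type*} [Fintype V]
    (A : Matrix V V (ZMod 2)) (hsym : ∀ i j, A i j = A j i) (u v : V → ZMod 2) :
    u ⬝ᵥ A.mulVec v = v ⬝ᵥ A.mulVec u := by
  simp only [Matrix.mulVec, dotProduct, Finset.mul_sum]
  rw [Finset.sum_comm]
  refine Finset.sum_congr rfl fun i _ => Finset.sum_congr rfl fun j _ => ?_
  rw [hsym]; ring

private lemma halt_lemma {V : Type*} [Fintype V] [DecidableEq V]
    (A : Matrix V V (ZMod 2)) (hsym : ∀ i j, A i j = A j i)
    (hdiag : ∀ i, A i i = 0) (v : V → ZMod 2) :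
    v ⬝ᵥ A.mulVec v = 0 := by
  simp only [Matrix.mulVec, dotProduct, Finset.mul_sum]
  rw [← Finset.sum_product']
  refine Finset.sum_involution (fun p _ => (p.2, p.1)) ?_ ?_ (fun p h => Finset.mem_univ _) ?_
  · intro a _
    have h2 : v a.2 * (A a.2 a.1 * v a.1) = v a.1 * (A a.1 a.2 * v a.2) := by
      rw [hsym]; ring
    rw [h2]; exact zmod2_add_self _
  · intro a _ hne hc
    have h1 : a.2 = a.1 := congrArg Prod.fst hc
    apply hne
    rw [← h1, hdiag]; ring
  · intro a _; rfl

private lemma one_mem_range_lemma {V : Type*} [Fintype V] [DecidableEq V]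
    (A : Matrix V V (ZMod 2)) (hsym : ∀ i j, A i j = A j i)
    (h : ∀ k : V → ZMod 2, A.mulVec k = 0 → (1 : V → ZMod 2) ⬝ᵥ k = 0) :
    (1 : V → ZMod 2) ∈ LinearMap.range A.mulVecLin := by
  classical
  set φ : (V → ZMod 2) →ₗ[ZMod 2] ZMod 2 :=
    { toFun := fun v => (1 : V → ZMod 2) ⬝ᵥ v
      map_add' := fun a b => by simp [dotProduct_add]
      map_smul' := fun r a => by simp [dotProduct_smul] } with hφ
  have hker : LinearMap.ker A.mulVecLin ≤ LinearMap.ker φ := by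
    intro k hk
    simp only [LinearMap.mem_ker] at hk ⊢
    exact h k hk
  set ψ₀ := Submodule.liftQ _ φ hker with hψ₀
  set eR := A.mulVecLin.quotKerEquivRange with heR
  obtain ⟨ψ, hψ⟩ := LinearMap.exists_extend (ψ₀ ∘ₗ (eR.symm : ↥(LinearMap.range A.mulVecLin) →ₗ[ZMod 2] _))
  have hψA : ∀ v : V → ZMod 2, ψ (A.mulVec v) = φ v := by
    intro v
    have h1 := LinearMap.congr_fun hψ ⟨A.mulVecLin v, LinearMap.mem_range_self _ v⟩
    simp only [LinearMap.comp_apply, Submodule.coe_subtype, LinearEquiv.coe_coe] at h1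
    have h3 : eR.symm ⟨A.mulVecLin v, LinearMap.mem_range_self _ v⟩ =
        (LinearMap.ker A.mulVecLin).mkQ v :=
      A.mulVecLin.quotKerEquivRange_symm_apply_image v (LinearMap.mem_range_self _ v)
    rw [h3] at h1
    have h4 : ψ₀ ((LinearMap.ker A.mulVecLin).mkQ v) = φ v := Submodule.liftQ_apply _ φ v
    rw [h4] at h1
    simpa only [Matrix.mulVecLin_apply] using h1
  set w : V → ZMod 2 := fun i => ψ (Pi.single i 1) with hw
  have hRiesz : ∀ z : V → ZMod 2, ψ z = w ⬝ᵥ z := by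
    intro z
    have h1 : z = ∑ i, z i • Pi.single i (1 : ZMod 2) := by
      rw [← Finset.univ_sum_single z]
      refine Finset.sum_congr rfl fun i _ => ?_
      funext j
      by_cases hij : j = i <;> simp [Pi.single_apply, hij]
    conv_lhs => rw [h1]
    rw [map_sum]
    simp only [_root_.map_smul, smul_eq_mul]
    simp [dotProduct, w, mul_comm]
  have hkey : ∀ v : V → ZMod 2, v ⬝ᵥ A.mulVec w = φ v := by
    intro v
    rw [← hpair_lemma A hsym, ← hRiesz, hψA]
  refine ⟨w, ?_⟩
  funext i
  have hki := hkey (Pi.single i 1)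
  rw [single_dotProduct, one_mul] at hki
  have hφi : φ (Pi.single i (1 : ZMod 2)) = 1 := by
    simp [φ, dotProduct, Pi.single_apply]
  rw [hφi] at hki
  simpa only [Matrix.mulVecLin_apply, Pi.one_apply] using hki

set_option maxHeartbeats 1600000 in
private lemma ker_dim_key {V : Type*} [Fintype V] [DecidableEq V]
    (A : Matrix V V (ZMod 2)) (x : V)
    (hsym : ∀ i j, A i j = A j i) (hdiag : ∀ i, A i i = 0)
    (B : Matrix V V (ZMod 2)) (hB : ∀ i j, B i j = A i j + (A x i + A x j)) :
    ((1 : V → ZMod 2) ∈ LinearMap.range A.mulVecLin →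
       Module.finrank (ZMod 2) (LinearMap.ker B.mulVecLin)
         = Module.finrank (ZMod 2) (LinearMap.ker A.mulVecLin) + 2) ∧
    ((1 : V → ZMod 2) ∉ LinearMap.range A.mulVecLin →
       Module.finrank (ZMod 2) (LinearMap.ker B.mulVecLin)
         = Module.finrank (ZMod 2) (LinearMap.ker A.mulVecLin)) := by
  classical
  set c : V → ZMod 2 := fun i => A x i with hc
  set e : V → ZMod 2 := Pi.single x 1 with he
  have hcx : c x = 0 := hdiag x
  have hAe : A.mulVec e = c := by
    funext i
    show (∑ j, A i j * e j) = A x i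
    rw [hsym x i]
    simp [e, Pi.single_apply, mul_comm]
  have hcv : ∀ v : V → ZMod 2, c ⬝ᵥ v = A.mulVec v x := by
    intro v; simp [Matrix.mulVec, dotProduct, hc]
  have h1e : (1 : V → ZMod 2) ⬝ᵥ e = 1 := by
    simp [dotProduct, e, Pi.single_apply]
  have hBv : ∀ v : V → ZMod 2, B.mulVec v
      = A.mulVec v + ((1 : V → ZMod 2) ⬝ᵥ v) • c + (c ⬝ᵥ v) • (1 : V → ZMod 2) := by
    intro v; funext i
    simp only [Matrix.mulVec, dotProduct, Pi.add_apply, Pi.smul_apply, Pi.one_apply,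
      smul_eq_mul, mul_one]
    simp only [hB, hc, mul_add, add_mul, Finset.sum_add_distrib, Finset.sum_mul,
      Finset.mul_sum, one_mul, mul_one, mul_comm, add_assoc]
  have hBe : B.mulVec e = 0 := by
    rw [hBv e, hAe, h1e, one_smul, hcv, hAe, hcx, zero_smul, add_zero]
    funext i
    simp only [Pi.add_apply, Pi.zero_apply]
    exact zmod2_add_self (c i)
  have hBk : ∀ k : V → ZMod 2, A.mulVec k = 0 → (1 : V → ZMod 2) ⬝ᵥ k = 0 →
      B.mulVec k = 0 := by
    intro k hk h1k
    rw [hBv k, h1k, hcv, hk, zero_smul, add_zero]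
    simp
  constructor
  · -- Case 1 : 1 ∈ range A
    rintro ⟨u, hu⟩
    rw [Matrix.mulVecLin_apply] at hu
    have hphi_ker : ∀ k : V → ZMod 2, A.mulVec k = 0 → (1 : V → ZMod 2) ⬝ᵥ k = 0 := by
      intro k hk
      have hp := hpair_lemma A hsym u k
      rw [hk, hu, dotProduct_zero] at hp
      rw [dotProduct_comm]
      exact hp.symm
    have hphi_u : (1 : V → ZMod 2) ⬝ᵥ u = 0 := by
      have hp := halt_lemma A hsym hdiag u
      rw [hu] at hp
      rw [dotProduct_comm]
      exact hp
    have hce : A.mulVec e ≠ 0 := by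
      intro h0
      have h1 := hphi_ker e h0
      rw [h1e] at h1
      exact one_ne_zero h1
    have hBu : B.mulVec u = 0 := by
      rw [hBv u, hphi_u, hcv, hu, zero_smul, add_zero]
      funext i
      simp only [Pi.add_apply, Pi.smul_apply, Pi.one_apply, smul_eq_mul, mul_one, Pi.zero_apply]
      exact zmod2_add_self 1
    let g : (↥(LinearMap.ker A.mulVecLin) × ZMod 2 × ZMod 2) →ₗ[ZMod 2] (V → ZMod 2) :=
      { toFun := fun p => (p.1 : V → ZMod 2) + p.2.1 • u + p.2.2 • e
        map_add' := by
          rintro ⟨a, α, β⟩ ⟨b, γ, δ⟩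
          simp only [Prod.fst_add, Prod.snd_add, Submodule.coe_add]
          module
        map_smul' := by
          rintro r ⟨a, α, β⟩
          simp only [Prod.smul_fst, Prod.smul_snd, Submodule.coe_smul, RingHom.id_apply,
            smul_eq_mul]
          module }
    have hmem : ∀ p, g p ∈ LinearMap.ker B.mulVecLin := by
      rintro ⟨⟨k, hk⟩, α, β⟩
      have hk' : A.mulVec k = 0 := hk
      rw [LinearMap.mem_ker]
      show B.mulVecLin (k + α • u + β • e) = 0
      rw [map_add, map_add, _root_.map_smul, _root_.map_smul]
      simp only [Matrix.mulVecLin_apply]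
      rw [hBk k hk' (hphi_ker k hk'), hBu, hBe]
      simp
    have hinj : Function.Injective (g.codRestrict _ hmem) := by
      rw [← LinearMap.ker_eq_bot, LinearMap.ker_eq_bot']
      rintro ⟨⟨k, hk⟩, α, β⟩ hp
      have hk' : A.mulVec k = 0 := hk
      have hz : k + α • u + β • e = 0 := congrArg Subtype.val hp
      have h3 : A.mulVec (k + α • u + β • e) = 0 := by rw [hz, Matrix.mulVec_zero]
      rw [Matrix.mulVec_add, Matrix.mulVec_add, Matrix.mulVec_smul, Matrix.mulVec_smul,
        hk', hu, hAe, zero_add] at h3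
      have hα : α = 0 := by
        have h4 := congrFun h3 x
        simpa [hcx] using h4
      have hβ : β = 0 := by
        rcases zmod2_cases β with h | h
        · exact h
        · exfalso
          rw [hα, h, zero_smul, zero_add, one_smul] at h3
          exact hce (hAe.trans h3)
      have hk0 : k = 0 := by
        rw [hα, hβ, zero_smul, zero_smul, add_zero, add_zero] at hz
        exact hz
      simp only [Prod.mk_eq_zero]
      exact ⟨Subtype.ext hk0, hα, hβ⟩
    have hsurj : Function.Surjective (g.codRestrict _ hmem) := by
      rintro ⟨v, hv⟩
      have hv' : B.mulVec v = 0 := hv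
      have hveq : A.mulVec v + ((1 : V → ZMod 2) ⬝ᵥ v) • c + (c ⬝ᵥ v) • (1 : V → ZMod 2)
          = 0 := by rw [← hBv v]; exact hv'
      set α := (1 : V → ZMod 2) ⬝ᵥ v with hαd
      set β := c ⬝ᵥ v with hβd
      have hk : A.mulVec (v + β • u + α • e) = 0 := by
        rw [Matrix.mulVec_add, Matrix.mulVec_add, Matrix.mulVec_smul, Matrix.mulVec_smul,
          hu, hAe]
        funext i
        have h0 := congrFun hveq i
        simp only [Pi.add_apply, Pi.smul_apply, Pi.one_apply, smul_eq_mul, Pi.zero_apply,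
          mul_one] at h0 ⊢
        linear_combination h0
      have hkm : v + β • u + α • e ∈ LinearMap.ker A.mulVecLin := by
        rw [LinearMap.mem_ker, Matrix.mulVecLin_apply]
        exact hk
      refine ⟨⟨⟨v + β • u + α • e, hkm⟩, β, α⟩, Subtype.ext ?_⟩
      show (v + β • u + α • e) + β • u + α • e = v
      funext i
      simp only [Pi.add_apply, Pi.smul_apply, smul_eq_mul]
      linear_combination zmod2_add_self (β * u i) + zmod2_add_self (α * e i)
    have hfr := (LinearEquiv.ofBijective (g.codRestrict _ hmem) ⟨hinj, hsurj⟩).finrank_eq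
    rw [Module.finrank_prod, Module.finrank_prod, Module.finrank_self] at hfr
    omega
  · -- Case 2 : 1 ∉ range A
    intro hnot
    obtain ⟨k0, hk0, hk01⟩ : ∃ k : V → ZMod 2, A.mulVec k = 0 ∧ (1 : V → ZMod 2) ⬝ᵥ k = 1 := by
      by_contra hcon
      push_neg at hcon
      apply hnot
      apply one_mem_range_lemma A hsym
      intro k hk
      rcases zmod2_cases ((1 : V → ZMod 2) ⬝ᵥ k) with h | h
      · exact h
      · exact absurd h (hcon k hk)
    have hk0m : k0 ∈ LinearMap.ker A.mulVecLin := by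
      rw [LinearMap.mem_ker, Matrix.mulVecLin_apply]; exact hk0
    let φr : ↥(LinearMap.ker A.mulVecLin) →ₗ[ZMod 2] ZMod 2 :=
      { toFun := fun k => (1 : V → ZMod 2) ⬝ᵥ (k : V → ZMod 2)
        map_add' := by intro a b; simp [dotProduct_add]
        map_smul' := by intro r a; simp [dotProduct_smul] }
    have hrangeφ : LinearMap.range φr = ⊤ := by
      rw [eq_top_iff]
      intro a _
      rcases zmod2_cases a with h | h
      · rw [h]; exact Submodule.zero_mem _
      · rw [h]; exact ⟨⟨k0, hk0m⟩, hk01⟩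
    have hrn := LinearMap.finrank_range_add_finrank_ker φr
    rw [hrangeφ, finrank_top, Module.finrank_self] at hrn
    let g2 : (↥(LinearMap.ker φr) × ZMod 2) →ₗ[ZMod 2] (V → ZMod 2) :=
      { toFun := fun p => ((p.1 : ↥(LinearMap.ker A.mulVecLin)) : V → ZMod 2) + p.2 • e
        map_add' := by
          rintro ⟨a, α⟩ ⟨b, β⟩
          simp only [Prod.fst_add, Prod.snd_add, Submodule.coe_add]
          module
        map_smul' := by
          rintro r ⟨a, α⟩
          simp only [Prod.smul_fst, Prod.smul_snd, Submodule.coe_smul, RingHom.id_apply,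
            smul_eq_mul]
          module }
    have hmem2 : ∀ p, g2 p ∈ LinearMap.ker B.mulVecLin := by
      rintro ⟨⟨⟨k, hkA⟩, hkφ⟩, β⟩
      have hkA' : A.mulVec k = 0 := hkA
      have hkφ' : (1 : V → ZMod 2) ⬝ᵥ k = 0 := hkφ
      rw [LinearMap.mem_ker]
      show B.mulVecLin (k + β • e) = 0
      rw [map_add, _root_.map_smul]
      simp only [Matrix.mulVecLin_apply]
      rw [hBk k hkA' hkφ', hBe]
      simp
    have hinj2 : Function.Injective (g2.codRestrict _ hmem2) := by
      rw [← LinearMap.ker_eq_bot, LinearMap.ker_eq_bot']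
      rintro ⟨⟨⟨k, hkA⟩, hkφ⟩, β⟩ hp
      have hkφ' : (1 : V → ZMod 2) ⬝ᵥ k = 0 := hkφ
      have hz : k + β • e = 0 := congrArg Subtype.val hp
      have hβ : β = 0 := by
        have h0 : (1 : V → ZMod 2) ⬝ᵥ (k + β • e) = 0 := by rw [hz, dotProduct_zero]
        rw [dotProduct_add, dotProduct_smul, h1e, hkφ', zero_add,
          smul_eq_mul, mul_one] at h0
        exact h0
      have hk0' : k = 0 := by
        rw [hβ, zero_smul, add_zero] at hz
        exact hz
      simp only [Prod.mk_eq_zero]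
      exact ⟨Subtype.ext (Subtype.ext hk0'), hβ⟩
    have hsurj2 : Function.Surjective (g2.codRestrict _ hmem2) := by
      rintro ⟨v, hv⟩
      have hv' : B.mulVec v = 0 := hv
      have hveq : A.mulVec v + ((1 : V → ZMod 2) ⬝ᵥ v) • c + (c ⬝ᵥ v) • (1 : V → ZMod 2)
          = 0 := by rw [← hBv v]; exact hv'
      set α := (1 : V → ZMod 2) ⬝ᵥ v with hαd
      have hβ0 : c ⬝ᵥ v = 0 := by
        rcases zmod2_cases (c ⬝ᵥ v) with h | h
        · exact h
        · exfalso
          apply hnot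
          refine ⟨v + α • e, ?_⟩
          rw [Matrix.mulVecLin_apply, Matrix.mulVec_add, Matrix.mulVec_smul, hAe]
          rw [h] at hveq
          funext i
          have h0 := congrFun hveq i
          simp only [Pi.add_apply, Pi.smul_apply, Pi.one_apply, smul_eq_mul, mul_one,
            Pi.zero_apply] at h0 ⊢
          exact zmod2_eq_one _ h0
      rw [hβ0, zero_smul, add_zero] at hveq
      have hkA : A.mulVec (v + α • e) = 0 := by
        rw [Matrix.mulVec_add, Matrix.mulVec_smul, hAe]
        exact hveq
      have hkAm : v + α • e ∈ LinearMap.ker A.mulVecLin := by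
        rw [LinearMap.mem_ker, Matrix.mulVecLin_apply]; exact hkA
      have hkφ : (⟨v + α • e, hkAm⟩ : ↥(LinearMap.ker A.mulVecLin)) ∈ LinearMap.ker φr := by
        rw [LinearMap.mem_ker]
        show (1 : V → ZMod 2) ⬝ᵥ (v + α • e) = 0
        rw [dotProduct_add, dotProduct_smul, h1e, smul_eq_mul, mul_one, ← hαd]
        exact zmod2_add_self α
      refine ⟨⟨⟨⟨v + α • e, hkAm⟩, hkφ⟩, α⟩, Subtype.ext ?_⟩
      show (v + α • e) + α • e = v
      funext i
      simp only [Pi.add_apply, Pi.smul_apply, smul_eq_mul]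
      linear_combination zmod2_add_self (α * e i)
    have hfr := (LinearEquiv.ofBijective (g2.codRestrict _ hmem2) ⟨hinj2, hsurj2⟩).finrank_eq
    rw [Module.finrank_prod, Module.finrank_self] at hfr
    omega

/-- Seidel switching with respect to the neighborhood `X = N(x)` of a vertex `x`:
over GF(2) the switched graph has adjacency matrix `A + K` where `K i j = 1` iff
exactly one of `i, j` lies in `X`.  If the all-ones vector lies in the GF(2)
column space of `A`, the 2-rank drops by 2; otherwise it is unchanged. -/
theorem seidel_switching_neighborhood_two_rank {V : Type*} [Fintype V] [DecidableEq V]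
    (G : SimpleGraph V) [DecidableRel G.Adj] (x : V)
    (A : Matrix V V (ZMod 2)) (hA : A = G.adjMatrix (ZMod 2))
    (K : Matrix V V (ZMod 2))
    (hK : ∀ i j, K i j = if (G.Adj x i ↔ G.Adj x j) then 0 else 1) :
    ((1 : V → ZMod 2) ∈ LinearMap.range A.mulVecLin → (A + K).rank + 2 = A.rank) ∧
    ((1 : V → ZMod 2) ∉ LinearMap.range A.mulVecLin → (A + K).rank = A.rank) := by
  have hsym : ∀ i j, A i j = A j i := by
    intro i j
    rw [hA]
    simp [SimpleGraph.adjMatrix_apply, G.adj_comm]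
  have hdiag : ∀ i, A i i = 0 := by
    intro i
    rw [hA]
    simp [SimpleGraph.adjMatrix_apply]
  have hAxi : ∀ i, A x i = if G.Adj x i then 1 else 0 := by
    intro i; rw [hA]; simp [SimpleGraph.adjMatrix_apply]
  have hB : ∀ i j, (A + K) i j = A i j + (A x i + A x j) := by
    intro i j
    rw [Matrix.add_apply, hK, hAxi, hAxi]
    by_cases h1 : G.Adj x i <;> by_cases h2 : G.Adj x j <;> simp [h1, h2] <;> decide
  obtain ⟨h1, h2⟩ := ker_dim_key A x hsym hdiag (A + K) hB
  have rn1 := LinearMap.finrank_range_add_finrank_ker A.mulVecLin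
  have rn2 := LinearMap.finrank_range_add_finrank_ker (A + K).mulVecLin
  have hr1 : A.rank = Module.finrank (ZMod 2) (LinearMap.range A.mulVecLin) := rfl
  have hr2 : (A + K).rank = Module.finrank (ZMod 2) (LinearMap.range (A + K).mulVecLin) := rfl
  constructor
  · intro h
    have := h1 h
    omega
  · intro h
    have := h2 h
    omega
end

section
/- Let A be the adjacency matrix over GF(2) of a graph G, x a vertex, X = N(x) its neighborhood with characteristic vector x̄, and A_X = A + K the adjacency matrix after Seidel switching with respect to X (where K_{uv}=1 iff exactly one of u,v is in X). Then the GF(2) column space of the augmented matrix [A_X | 1 | x̄] equals the column space of [A | 1]. -/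
/-- With `A` the GF(2) adjacency matrix of `G`, `x` a vertex, `xbar` the characteristic
vector of `X = N(x)` and `A + K` the matrix after Seidel switching with respect to `X`
(`K i j = 1` iff exactly one of `i, j` is in `X`), the GF(2) column space of the
augmented matrix `[A_X | 1 | xbar]` equals the column space of `[A | 1]`. -/
theorem seidel_switching_augmented_colSpace {V : Type*} [Fintype V] [DecidableEq V]
    (G : SimpleGraph V) [DecidableRel G.Adj] (x : V)
    (A : Matrix V V (ZMod 2)) (hA : A = G.adjMatrix (ZMod 2))
    (xbar : V → ZMod 2) (hxbar : ∀ i, xbar i = if G.Adj x i then 1 else 0)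
    (K : Matrix V V (ZMod 2))
    (hK : ∀ i j, K i j = if (G.Adj x i ↔ G.Adj x j) then 0 else 1) :
    Submodule.span (ZMod 2) (Set.range (A + K).transpose ∪ {(1 : V → ZMod 2), xbar}) =
      Submodule.span (ZMod 2) (Set.range A.transpose ∪ {(1 : V → ZMod 2)}) := by
  have hxbarA : xbar = A.transpose x := by
    funext i
    simp only [hxbar, hA, Matrix.transpose_apply, SimpleGraph.adjMatrix_apply]
    by_cases h : G.Adj x i
    · rw [if_pos h, if_pos h.symm]
    · rw [if_neg h, if_neg fun h' => h h'.symm]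
  have hKval : ∀ i j, K i j = xbar i + xbar j := by
    intro i j
    rw [hK, hxbar, hxbar]
    by_cases h1 : G.Adj x i <;> by_cases h2 : G.Adj x j <;> simp [h1, h2] <;> decide
  have hcol : ∀ j, (A + K).transpose j = A.transpose j + xbar + xbar j • (1 : V → ZMod 2) := by
    intro j
    funext i
    simp only [Matrix.transpose_apply, Matrix.add_apply, Pi.add_apply, Pi.smul_apply,
      Pi.one_apply, smul_eq_mul, mul_one, hKval]
    ring
  apply le_antisymm <;> rw [Submodule.span_le]
  · -- LHS ⊆ span RHS
    have h1 : (1 : V → ZMod 2) ∈ Submodule.span (ZMod 2)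
        (Set.range A.transpose ∪ {(1 : V → ZMod 2)}) :=
      Submodule.subset_span (Or.inr rfl)
    have hx : xbar ∈ Submodule.span (ZMod 2)
        (Set.range A.transpose ∪ {(1 : V → ZMod 2)}) := by
      rw [hxbarA]
      exact Submodule.subset_span (Or.inl ⟨x, rfl⟩)
    rintro v (⟨j, rfl⟩ | rfl | rfl)
    · rw [hcol]
      exact add_mem (add_mem (Submodule.subset_span (Or.inl ⟨j, rfl⟩)) hx)
        (Submodule.smul_mem _ _ h1)
    · exact h1
    · exact hx
  · -- RHS ⊆ span LHS
    have h1 : (1 : V → ZMod 2) ∈ Submodule.span (ZMod 2)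
        (Set.range (A + K).transpose ∪ {(1 : V → ZMod 2), xbar}) :=
      Submodule.subset_span (Or.inr (Or.inl rfl))
    have hx : xbar ∈ Submodule.span (ZMod 2)
        (Set.range (A + K).transpose ∪ {(1 : V → ZMod 2), xbar}) :=
      Submodule.subset_span (Or.inr (Or.inr rfl))
    rintro v (⟨j, rfl⟩ | rfl)
    · have : A.transpose j = (A + K).transpose j - xbar - xbar j • (1 : V → ZMod 2) := by
        rw [hcol]; abel
      rw [this]
      exact sub_mem (sub_mem (Submodule.subset_span (Or.inl ⟨j, rfl⟩)) hx)
        (Submodule.smul_mem _ _ h1)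
    · exact h1
end

section
/- Let G be a graph with adjacency matrix A, and W a vertex subset inducing a regular subgraph such that every vertex outside W has |W|, |W|/2 or 0 neighbors in W. Let L be the 0–1 matrix with L_{ij} = 1 iff (i ∈ W, j ∉ W and j has |W|/2 neighbors in W) or symmetrically (j ∈ W, i ∉ W and i has |W|/2 neighbors in W). Then rank(L) over GF(2) is at most 2, and therefore the 2-rank of the GM-switched graph G_W (with adjacency matrix A + L over GF(2)) lies in {2-rank(G) − 2, 2-rank(G), 2-rank(G) + 2}. -/
open Matrix

section Helpers

variable {F : Type*} [Field F]

lemma myRankAddLe {m : Type*} [Fintype m] [DecidableEq m]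
    (A B : Matrix m m F) : (A + B).rank ≤ A.rank + B.rank := by
  classical
  have h : LinearMap.range (A + B).mulVecLin ≤
      LinearMap.range A.mulVecLin ⊔ LinearMap.range B.mulVecLin := by
    rintro x ⟨y, rfl⟩
    rw [Matrix.mulVecLin_add]
    exact Submodule.add_mem_sup ⟨y, rfl⟩ ⟨y, rfl⟩
  calc (A + B).rank ≤ Module.finrank F
        ↑(LinearMap.range A.mulVecLin ⊔ LinearMap.range B.mulVecLin) :=
        Submodule.finrank_mono h
    _ ≤ A.rank + B.rank := Submodule.finrank_add_le_finrank_add_finrank _ _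

lemma myRangeProdMap {M N M' N' : Type*} [AddCommGroup M] [AddCommGroup N]
    [AddCommGroup M'] [AddCommGroup N'] [Module F M] [Module F N] [Module F M'] [Module F N']
    (f : M →ₗ[F] M') (g : N →ₗ[F] N') :
    LinearMap.range (f.prodMap g) = (LinearMap.range f).prod (LinearMap.range g) := by
  ext ⟨x, y⟩
  constructor
  · rintro ⟨⟨a, b⟩, h⟩
    rw [LinearMap.prodMap_apply] at h
    exact ⟨⟨a, congrArg Prod.fst h⟩, ⟨b, congrArg Prod.snd h⟩⟩
  · rintro ⟨⟨a, ha⟩, ⟨b, hb⟩⟩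
    exact ⟨(a, b), Prod.ext ha hb⟩

noncomputable def mySubmoduleProdEquiv {M N : Type*} [AddCommGroup M] [AddCommGroup N]
    [Module F M] [Module F N] (p : Submodule F M) (q : Submodule F N) :
    ↥(p.prod q) ≃ₗ[F] (↥p × ↥q) where
  toFun x := (⟨x.1.1, x.2.1⟩, ⟨x.1.2, x.2.2⟩)
  invFun x := ⟨(x.1.1, x.2.1), ⟨x.1.2, x.2.2⟩⟩
  map_add' _ _ := rfl
  map_smul' _ _ := rfl
  left_inv _ := rfl
  right_inv _ := rfl

lemma myRankFromBlocks {m n : Type*} [Fintype m] [Fintype n] [DecidableEq m] [DecidableEq n]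
    (B : Matrix m m F) (D : Matrix n n F) :
    (Matrix.fromBlocks B 0 0 D).rank = B.rank + D.rank := by
  classical
  set φ := LinearEquiv.sumArrowLequivProdArrow m n F F with hφ
  have hcomp : (Matrix.fromBlocks B 0 0 D).mulVecLin =
      φ.symm.toLinearMap ∘ₗ (B.mulVecLin.prodMap D.mulVecLin) ∘ₗ φ.toLinearMap := by
    apply LinearMap.ext
    intro x
    funext s
    cases s with
    | inl a =>
      simp [Matrix.mulVecLin_apply, Matrix.fromBlocks_mulVec, φ,
        LinearEquiv.sumArrowLequivProdArrow, Equiv.sumArrowEquivProdArrow]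
    | inr b =>
      simp [Matrix.mulVecLin_apply, Matrix.fromBlocks_mulVec, φ,
        LinearEquiv.sumArrowLequivProdArrow, Equiv.sumArrowEquivProdArrow]
  rw [Matrix.rank, hcomp]
  rw [LinearMap.range_comp, LinearMap.range_comp_of_range_eq_top _ φ.range]
  rw [LinearEquiv.finrank_map_eq]
  rw [myRangeProdMap]
  rw [(mySubmoduleProdEquiv _ _).finrank_eq, Module.finrank_prod]
  rfl

end Helpers

universe u

lemma myEvenRankAux : ∀ (n : ℕ) {V : Type u} [Fintype V] [DecidableEq V]
    (M : Matrix V V (ZMod 2)), Fintype.card V ≤ n → Mᵀ = M → (∀ i, M i i = 0) →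
    Even M.rank := by
  intro n
  induction n with
  | zero =>
    intro V _ _ M hcard _ _
    have h0 : M.rank = 0 := Nat.le_zero.mp (M.rank_le_card_width.trans hcard)
    simp [h0]
  | succ n ih =>
    intro V _ _ M hcard hsym hdiag
    by_cases hM : M = 0
    · simp [hM]
    · -- find a nonzero entry
      have : ∃ i j, M i j ≠ 0 := by
        by_contra h
        push_neg at h
        exact hM (by ext i j; simp [h i j])
      obtain ⟨i, j, hij⟩ := this
      have hone : ∀ x : ZMod 2, x ≠ 0 → x = 1 := by decide
      have hMij : M i j = 1 := hone _ hij
      have hMji : M j i = 1 := by rw [← hsym] at hMij; exact hMij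
      have hinej : i ≠ j := by
        intro h; rw [h, hdiag] at hMij; exact one_ne_zero hMij.symm
      -- symmetry of entries
      have hs : ∀ a b, M b a = M a b := fun a b => congrFun (congrFun hsym a) b
      -- the congruence matrix
      set u' : V → ZMod 2 := fun k => if k ≠ i ∧ k ≠ j then M k j else 0 with hu'
      set v' : V → ZMod 2 := fun k => if k ≠ i ∧ k ≠ j then M k i else 0 with hv'
      have hu'i : u' i = 0 := by simp [hu']
      have hu'j : u' j = 0 := by simp [hu']
      have hv'i : v' i = 0 := by simp [hv']
      have hv'j : v' j = 0 := by simp [hv']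
      set c : Matrix V V (ZMod 2) := Matrix.of fun k l =>
        u' k * (if l = i then 1 else 0) + v' k * (if l = j then 1 else 0) with hc
      have hcX : ∀ (X : Matrix V V (ZMod 2)) k l, (c * X) k l = u' k * X i l + v' k * X j l := by
        intro X k l
        simp only [Matrix.mul_apply, hc, Matrix.of_apply, add_mul, mul_ite, mul_one, mul_zero,
          ite_mul, zero_mul, Finset.sum_add_distrib]
        rw [Finset.sum_ite_eq' Finset.univ i (fun a => u' k * X a l),
          Finset.sum_ite_eq' Finset.univ j (fun a => v' k * X a l)]
        simp
      have hXct : ∀ (X : Matrix V V (ZMod 2)) k l, (X * cᵀ) k l = X k i * u' l + X k j * v' l := by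
        intro X k l
        simp only [Matrix.mul_apply, Matrix.transpose_apply, hc, Matrix.of_apply, mul_add,
          mul_ite, mul_one, mul_zero, ite_mul, zero_mul, Finset.sum_add_distrib]
        rw [Finset.sum_ite_eq' Finset.univ i (fun a => X k a * u' l),
          Finset.sum_ite_eq' Finset.univ j (fun a => X k a * v' l)]
        simp [mul_comm]
      set E : Matrix V V (ZMod 2) := 1 + c with hE
      have hcc : c * c = 0 := by
        ext k l
        rw [hcX c k l]
        have h1 : c i l = 0 := by simp [hc, hu'i, hv'i]
        have h2 : c j l = 0 := by simp [hc, hu'j, hv'j]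
        simp [h1, h2]
      have hXX : ∀ X : Matrix V V (ZMod 2), X + X = 0 := by
        intro X; ext a b; exact CharTwo.add_self_eq_zero _
      have hEE : E * E = 1 := by
        have h5 : (1 + c) * (1 + c) = 1 + (c + c) + c * c := by noncomm_ring
        rw [hE, h5, hcc, hXX, add_zero, add_zero]
      have hEdet : IsUnit E.det := by
        apply IsUnit.of_mul_eq_one E.det
        rw [← Matrix.det_mul, hEE, Matrix.det_one]
      set M' : Matrix V V (ZMod 2) := E * M * Eᵀ with hM'
      have hrank : M'.rank = M.rank := by
        rw [hM', Matrix.rank_mul_eq_left_of_isUnit_det _ _ (by rwa [Matrix.det_transpose]),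
          Matrix.rank_mul_eq_right_of_isUnit_det _ _ hEdet]
      -- entry formula for M'
      have hent : ∀ k l, M' k l = M k l + (u' k * M i l + v' k * M j l)
          + (M k i * u' l + M k j * v' l) + (u' k * v' l + v' k * u' l) := by
        intro k l
        have expand : M' = M + c * M + (M * cᵀ + c * (M * cᵀ)) := by
          rw [hM', hE, Matrix.transpose_add, Matrix.transpose_one]
          noncomm_ring
        rw [expand]
        have h3 : (M * cᵀ) i l = v' l := by
          rw [hXct]; rw [hdiag i, hMij]; ring
        have h4 : (M * cᵀ) j l = u' l := by
          rw [hXct]; rw [hdiag j, hMji]; ring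
        simp only [Matrix.add_apply]
        rw [hcX M k l, hXct M k l, hcX (M * cᵀ) k l, h3, h4]
        ring
      have hM'sym : ∀ a b, M' b a = M' a b := by
        intro a b
        rw [hent, hent, hs a b, hs a i, hs a j, hs i b, hs j b]
        ring
      have hu'v : ∀ k, k ≠ i → k ≠ j → u' k = M k j ∧ v' k = M k i := by
        intro k h1 h2
        constructor <;> simp [hu', hv', h1, h2]
      have hM'ki : ∀ k, k ≠ i → k ≠ j → M' k i = 0 := by
        intro k h1 h2
        rw [hent, (hu'v k h1 h2).1, (hu'v k h1 h2).2, hu'i, hv'i, hdiag i, hMji]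
        generalize M k i = a
        generalize M k j = b
        revert a b
        decide
      have hM'kj : ∀ k, k ≠ i → k ≠ j → M' k j = 0 := by
        intro k h1 h2
        rw [hent, (hu'v k h1 h2).1, (hu'v k h1 h2).2, hu'j, hv'j, hdiag j, hMij]
        generalize M k i = a
        generalize M k j = b
        revert a b
        decide
      have hM'ii : M' i i = 0 := by rw [hent, hu'i, hv'i, hdiag i]; ring
      have hM'jj : M' j j = 0 := by rw [hent, hu'j, hv'j, hdiag j]; ring
      have hM'ij : M' i j = 1 := by rw [hent, hu'i, hv'i, hu'j, hv'j, hMij]; ring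
      have hM'ji : M' j i = 1 := by rw [hM'sym i j]; exact hM'ij
      have hM'diag : ∀ k, M' k k = 0 := by
        intro k
        rw [hent, hdiag k, hs k i, hs k j]
        generalize u' k = a
        generalize v' k = b
        generalize M k i = x
        generalize M k j = y
        revert a b x y
        decide
      -- split off a 2x2 block
      have hcardS : Fintype.card {x : V // x ≠ i ∧ x ≠ j} ≤ n := by
        have h6 : Fintype.card {x : V // x ≠ i ∧ x ≠ j} < Fintype.card V :=
          Fintype.card_subtype_lt (x := i) (by simp)
        omega
      set f : {x : V // x ≠ i ∧ x ≠ j} ⊕ Bool → V :=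
        Sum.elim Subtype.val (fun b => cond b i j) with hf
      have hfbij : Function.Bijective f := by
        constructor
        · rintro (⟨a, ha1, ha2⟩ | a) (⟨b, hb1, hb2⟩ | b) h
          · simpa [hf, Subtype.ext_iff] using h
          · exfalso
            cases b
            · exact ha2 (by simpa [hf] using h)
            · exact ha1 (by simpa [hf] using h)
          · exfalso
            cases a
            · exact hb2 (by simpa [hf] using h.symm)
            · exact hb1 (by simpa [hf] using h.symm)
          · cases a <;> cases b
            · rfl
            · exact absurd h (Ne.symm hinej)
            · exact absurd h hinej
            · rfl
        · intro x
          by_cases hx1 : x = i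
          · exact ⟨Sum.inr true, by simp [hf, hx1]⟩
          by_cases hx2 : x = j
          · exact ⟨Sum.inr false, by simp [hf, hx2]⟩
          · exact ⟨Sum.inl ⟨x, hx1, hx2⟩, rfl⟩
      set e : {x : V // x ≠ i ∧ x ≠ j} ⊕ Bool ≃ V := Equiv.ofBijective f hfbij with he
      have heval : ∀ s, e s = f s := fun s => rfl
      set B : Matrix {x : V // x ≠ i ∧ x ≠ j} {x : V // x ≠ i ∧ x ≠ j} (ZMod 2) :=
        Matrix.of fun s t => M' s.1 t.1 with hBdef
      set D : Matrix Bool Bool (ZMod 2) :=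
        Matrix.of fun b b' => if b = b' then 0 else 1 with hDdef
      have hsub : M'.submatrix e e = Matrix.fromBlocks B 0 0 D := by
        ext s t
        cases s with
        | inl s =>
          cases t with
          | inl t => rfl
          | inr b =>
            rw [Matrix.submatrix_apply, Matrix.fromBlocks_apply₁₂, heval, heval]
            cases b
            · exact hM'kj s.1 s.2.1 s.2.2
            · exact hM'ki s.1 s.2.1 s.2.2
        | inr a =>
          cases t with
          | inl t =>
            rw [Matrix.submatrix_apply, Matrix.fromBlocks_apply₂₁, heval, heval]
            cases a
            · rw [hM'sym]; exact hM'kj t.1 t.2.1 t.2.2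
            · rw [hM'sym]; exact hM'ki t.1 t.2.1 t.2.2
          | inr b =>
            rw [Matrix.submatrix_apply, Matrix.fromBlocks_apply₂₂, heval, heval]
            cases a <;> cases b <;> simp [hf, hDdef]
            · exact hM'jj
            · exact hM'ji
            · exact hM'ij
            · exact hM'ii
      have hDD : D * D = 1 := by
        ext a b
        rw [Matrix.mul_apply, Fintype.sum_bool]
        cases a <;> cases b <;> simp [hDdef, Matrix.one_apply]
      have hrankD : D.rank = 2 := by
        have : IsUnit D.det := by
          apply IsUnit.of_mul_eq_one D.det
          rw [← Matrix.det_mul, hDD, Matrix.det_one]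
        rw [Matrix.rank_of_isUnit D ((Matrix.isUnit_iff_isUnit_det D).mpr this)]
        simp
      have hEvenB : Even B.rank := by
        apply ih B hcardS
        · ext s t
          exact hM'sym s.1 t.1
        · exact fun s => hM'diag s.1
      have hfinal : M.rank = B.rank + 2 := by
        rw [← hrank, ← Matrix.rank_submatrix M' e e, hsub, myRankFromBlocks, hrankD]
      obtain ⟨t, ht⟩ := hEvenB
      exact ⟨t + 1, by omega⟩

/-- Godsil–McKay switching: if `W` induces a regular subgraph of `G` and every vertex
outside `W` has `|W|`, `|W|/2` or `0` neighbors in `W`, then the GF(2) change matrix `L`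
(with `L i j = 1` iff one of `i, j` lies in `W`, the other lies outside `W` and has
exactly `|W|/2` neighbors in `W`) has 2-rank at most 2, and hence the 2-rank of the
switched graph (adjacency matrix `A + L` over GF(2)) differs from that of `G` by at
most 2 (and 2-ranks are even, so it is `rank A - 2`, `rank A`, or `rank A + 2`). -/
theorem gm_switching_two_rank {V : Type*} [Fintype V] [DecidableEq V]
    (G : SimpleGraph V) [DecidableRel G.Adj] (W : Finset V)
    (hreg : ∃ d : ℕ, ∀ w ∈ W, (W.filter (G.Adj w)).card = d)
    (hout : ∀ v ∉ W, (W.filter (G.Adj v)).card = W.card ∨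
        2 * (W.filter (G.Adj v)).card = W.card ∨ (W.filter (G.Adj v)).card = 0)
    (A : Matrix V V (ZMod 2)) (hA : A = G.adjMatrix (ZMod 2))
    (L : Matrix V V (ZMod 2))
    (hL : ∀ i j, L i j =
      if (i ∈ W ∧ j ∉ W ∧ 2 * (W.filter (G.Adj j)).card = W.card) ∨
         (j ∈ W ∧ i ∉ W ∧ 2 * (W.filter (G.Adj i)).card = W.card) then 1 else 0) :
    L.rank ≤ 2 ∧
      (A + L).rank ∈ ({A.rank - 2, A.rank, A.rank + 2} : Set ℕ) := by
  classical
  set u : V → ZMod 2 := fun k => if k ∈ W then 1 else 0 with hu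
  set v : V → ZMod 2 := fun k =>
    if k ∉ W ∧ 2 * (W.filter (G.Adj k)).card = W.card then 1 else 0 with hv
  have hLdecomp : L = Matrix.vecMulVec u v + Matrix.vecMulVec v u := by
    ext i j
    rw [Matrix.add_apply, Matrix.vecMulVec_apply, Matrix.vecMulVec_apply, hL]
    simp only [hu, hv]
    by_cases h1 : i ∈ W <;> by_cases h2 : j ∈ W <;>
      by_cases h3 : 2 * (W.filter (G.Adj i)).card = W.card <;>
      by_cases h4 : 2 * (W.filter (G.Adj j)).card = W.card <;>
      simp [h1, h2, h3, h4]
  have hrankvmv : ∀ a b : V → ZMod 2, (Matrix.vecMulVec a b).rank ≤ 1 := by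
    intro a b
    rw [Matrix.vecMulVec_eq Unit]
    refine (Matrix.rank_mul_le_left _ _).trans ?_
    refine (Matrix.rank_le_card_width _).trans ?_
    simp
  have hLrank : L.rank ≤ 2 := by
    rw [hLdecomp]
    exact (myRankAddLe _ _).trans (add_le_add (hrankvmv u v) (hrankvmv v u))
  have hAsym : Aᵀ = A := by rw [hA]; exact SimpleGraph.transpose_adjMatrix G
  have hAdiag : ∀ i, A i i = 0 := by
    intro i; rw [hA]; simp [SimpleGraph.adjMatrix_apply]
  have hLsym : Lᵀ = L := by
    ext i j
    rw [Matrix.transpose_apply, hL, hL]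
    rw [if_congr (show _ ↔ _ from ⟨fun h => h.symm, fun h => h.symm⟩) rfl rfl]
  have hLdiag : ∀ i, L i i = 0 := by
    intro i
    rw [hL, if_neg]
    rintro (⟨h1, h2, _⟩ | ⟨h1, h2, _⟩) <;> exact h2 h1
  have hSsym : (A + L)ᵀ = A + L := by rw [Matrix.transpose_add, hAsym, hLsym]
  have hSdiag : ∀ i, (A + L) i i = 0 := by
    intro i; rw [Matrix.add_apply, hAdiag, hLdiag, add_zero]
  have hEA : Even A.rank := myEvenRankAux (Fintype.card V) A le_rfl hAsym hAdiag
  have hES : Even (A + L).rank := myEvenRankAux (Fintype.card V) (A + L) le_rfl hSsym hSdiag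
  have h1 : (A + L).rank ≤ A.rank + 2 :=
    (myRankAddLe A L).trans (by omega)
  have h2 : A.rank ≤ (A + L).rank + 2 := by
    have hLL : L + L = 0 := by ext a b; exact CharTwo.add_self_eq_zero _
    have hALL : A = (A + L) + L := by rw [add_assoc, hLL, add_zero]
    calc A.rank = ((A + L) + L).rank := by rw [← hALL]
      _ ≤ (A + L).rank + L.rank := myRankAddLe _ _
      _ ≤ (A + L).rank + 2 := by omega
  refine ⟨hLrank, ?_⟩
  obtain ⟨a, ha⟩ := hEA
  obtain ⟨b, hb⟩ := hES
  simp only [Set.mem_insert_iff, Set.mem_singleton_iff]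
  omega
end

section
/- Let A₁, A₂ be symmetric matrices over GF(2) with zero diagonal and let A = A₁ ⊗ J + J ⊗ A₂ over GF(2) (J all-ones of matching sizes). Then the all-ones vector lies in the column space of A if and only if the all-ones vector lies in the column space of A₁ or in the column space of A₂. -/
open Kronecker

private lemma sum_eq_zero_of_mulVec_one {n : Type*} [Fintype n]
    (A : Matrix n n (ZMod 2)) (hsymm : A.IsSymm) (hdiag : ∀ i, A i i = 0)
    (v : n → ZMod 2) (hv : A.mulVec v = 1) : ∑ i, v i = 0 := by
  have key : ∑ p : n × n, v p.1 * A p.1 p.2 * v p.2 = 0 := by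
    apply Finset.sum_involution (fun p _ => (p.2, p.1))
    · intro p _
      have hA : A p.2 p.1 = A p.1 p.2 := by
        have := congrFun (congrFun hsymm p.1) p.2
        simpa [Matrix.transpose_apply] using this
      have : v p.2 * A p.2 p.1 * v p.1 = v p.1 * A p.1 p.2 * v p.2 := by
        rw [hA]; ring
      rw [this]
      exact CharTwo.add_self_eq_zero _
    · intro p _ hp
      intro hcontra
      have h1 : p.2 = p.1 := congrArg Prod.fst hcontra
      apply hp
      rw [show p.1 = p.2 from h1.symm, hdiag]
      ring
    · intro p _; exact Finset.mem_univ _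
    · intro p _; rfl
  have : ∑ i, v i = ∑ p : n × n, v p.1 * A p.1 p.2 * v p.2 := by
    rw [Fintype.sum_prod_type]
    refine Finset.sum_congr rfl fun i _ => ?_
    have h1 : A.mulVec v i = 1 := congrFun hv i
    calc v i = v i * A.mulVec v i := by rw [h1, mul_one]
    _ = ∑ k, v i * A i k * v k := by
        simp [Matrix.mulVec, dotProduct, Finset.mul_sum, mul_assoc]
  rw [this, key]

private lemma kron_entry {n₁ n₂ : Type*} [Fintype n₁] [Fintype n₂]
    (A₁ : Matrix n₁ n₁ (ZMod 2)) (A₂ : Matrix n₂ n₂ (ZMod 2))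
    (J₁ : Matrix n₁ n₁ (ZMod 2)) (hJ₁ : ∀ i j, J₁ i j = 1)
    (J₂ : Matrix n₂ n₂ (ZMod 2)) (hJ₂ : ∀ i j, J₂ i j = 1)
    (w : n₁ × n₂ → ZMod 2) (i : n₁) (j : n₂) :
    (A₁ ⊗ₖ J₂ + J₁ ⊗ₖ A₂).mulVec w (i, j)
      = A₁.mulVec (fun k => ∑ l, w (k, l)) i
        + A₂.mulVec (fun l => ∑ k, w (k, l)) j := by
  simp only [Matrix.mulVec, dotProduct, Matrix.add_apply,
    Matrix.kroneckerMap_apply, Fintype.sum_prod_type]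
  have step : ∀ k l, (A₁ i k * J₂ j l + J₁ i k * A₂ j l) * w (k, l)
      = A₁ i k * w (k, l) + A₂ j l * w (k, l) := by
    intro k l; rw [hJ₁, hJ₂]; ring
  calc ∑ k, ∑ l, (A₁ i k * J₂ j l + J₁ i k * A₂ j l) * w (k, l)
      = ∑ k, ∑ l, (A₁ i k * w (k, l) + A₂ j l * w (k, l)) := by
        exact Finset.sum_congr rfl fun k _ => Finset.sum_congr rfl fun l _ => step k l
    _ = (∑ k, ∑ l, A₁ i k * w (k, l)) + ∑ k, ∑ l, A₂ j l * w (k, l) := by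
        simp [Finset.sum_add_distrib]
    _ = (∑ k, A₁ i k * ∑ l, w (k, l)) + ∑ l, A₂ j l * ∑ k, w (k, l) := by
        congr 1
        · exact Finset.sum_congr rfl fun k _ => (Finset.mul_sum _ _ _).symm
        · rw [Finset.sum_comm]
          exact Finset.sum_congr rfl fun l _ => (Finset.mul_sum _ _ _).symm

/-- For symmetric zero-diagonal matrices `A₁, A₂` over GF(2) and
`A = A₁ ⊗ J + J ⊗ A₂`, the all-ones vector lies in the column space of `A`
iff it lies in the column space of `A₁` or in the column space of `A₂`. -/
theorem one_mem_colSpace_kroneckerSum_iff {n₁ n₂ : Type*} [Fintype n₁] [Fintype n₂]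
    (A₁ : Matrix n₁ n₁ (ZMod 2)) (A₂ : Matrix n₂ n₂ (ZMod 2))
    (h₁symm : A₁.IsSymm) (h₁diag : ∀ i, A₁ i i = 0)
    (h₂symm : A₂.IsSymm) (h₂diag : ∀ i, A₂ i i = 0)
    (J₁ : Matrix n₁ n₁ (ZMod 2)) (hJ₁ : ∀ i j, J₁ i j = 1)
    (J₂ : Matrix n₂ n₂ (ZMod 2)) (hJ₂ : ∀ i j, J₂ i j = 1) :
    (1 : n₁ × n₂ → ZMod 2) ∈ LinearMap.range (A₁ ⊗ₖ J₂ + J₁ ⊗ₖ A₂).mulVecLin ↔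
      ((1 : n₁ → ZMod 2) ∈ LinearMap.range A₁.mulVecLin ∨
        (1 : n₂ → ZMod 2) ∈ LinearMap.range A₂.mulVecLin) := by
  classical
  constructor
  · rintro ⟨w, hw⟩
    simp only [Matrix.mulVecLin_apply] at hw
    rcases isEmpty_or_nonempty n₁ with h₁ | ⟨⟨i₀⟩⟩
    · exact Or.inl ⟨0, Subsingleton.elim _ _⟩
    rcases isEmpty_or_nonempty n₂ with h₂ | ⟨⟨j₀⟩⟩
    · exact Or.inr ⟨0, Subsingleton.elim _ _⟩
    set v₁ : n₁ → ZMod 2 := fun k => ∑ l, w (k, l) with hv₁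
    set v₂ : n₂ → ZMod 2 := fun l => ∑ k, w (k, l) with hv₂
    have hcells : ∀ i j, A₁.mulVec v₁ i + A₂.mulVec v₂ j = 1 := by
      intro i j
      rw [← kron_entry A₁ A₂ J₁ hJ₁ J₂ hJ₂ w i j, hw]
      rfl
    have hconst₁ : ∀ i, A₁.mulVec v₁ i = A₁.mulVec v₁ i₀ := by
      intro i
      have h1 := hcells i j₀
      have h2 := hcells i₀ j₀
      rw [← h2] at h1
      exact add_right_cancel h1
    have hc : A₁.mulVec v₁ i₀ = 0 ∨ A₁.mulVec v₁ i₀ = 1 := by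
      generalize A₁.mulVec v₁ i₀ = c
      revert c; decide
    rcases hc with hc | hc
    · refine Or.inr ⟨v₂, ?_⟩
      simp only [Matrix.mulVecLin_apply]
      funext j
      have := hcells i₀ j
      rw [hc, zero_add] at this
      simpa using this
    · refine Or.inl ⟨v₁, ?_⟩
      simp only [Matrix.mulVecLin_apply]
      funext i
      rw [hconst₁ i, hc]; rfl
  · rintro (⟨v, hv⟩ | ⟨v, hv⟩)
    · simp only [Matrix.mulVecLin_apply] at hv
      rcases isEmpty_or_nonempty n₂ with h₂ | ⟨⟨j₀⟩⟩
      · exact ⟨0, Subsingleton.elim _ _⟩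
      refine ⟨fun p => if p.2 = j₀ then v p.1 else 0, ?_⟩
      simp only [Matrix.mulVecLin_apply]
      funext ⟨i, j⟩
      rw [kron_entry A₁ A₂ J₁ hJ₁ J₂ hJ₂ _ i j]
      have hrow : (fun k => ∑ l, (if l = j₀ then v k else 0)) = v := by
        funext k; simp
      have hcol : (fun l => ∑ k : n₁, (if l = j₀ then v k else 0)) = 0 := by
        funext l
        by_cases h : l = j₀
        · simp [h, sum_eq_zero_of_mulVec_one A₁ h₁symm h₁diag v hv]
        · simp [h]
      rw [hrow, hcol, hv]
      simp
    · simp only [Matrix.mulVecLin_apply] at hv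
      rcases isEmpty_or_nonempty n₁ with h₁ | ⟨⟨i₀⟩⟩
      · exact ⟨0, Subsingleton.elim _ _⟩
      refine ⟨fun p => if p.1 = i₀ then v p.2 else 0, ?_⟩
      simp only [Matrix.mulVecLin_apply]
      funext ⟨i, j⟩
      rw [kron_entry A₁ A₂ J₁ hJ₁ J₂ hJ₂ _ i j]
      have hrow : (fun k => ∑ l : n₂, (if k = i₀ then v l else 0)) = 0 := by
        funext k
        by_cases h : k = i₀
        · simp [h, sum_eq_zero_of_mulVec_one A₂ h₂symm h₂diag v hv]
        · simp [h]
      have hcol : (fun l => ∑ k, (if k = i₀ then v l else 0)) = v := by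
        funext l; simp
      rw [hrow, hcol, hv]
      simp
end

section
/- Let A₁, A₂ be symmetric matrices over GF(2) with zero diagonal such that A₁ has a zero column and A₂ has a zero column (i.e., the corresponding graphs have isolated vertices). Then the GF(2) rank of A = A₁ ⊗ J + J ⊗ A₂ equals rank(A₁) + rank(A₂). -/
open Kronecker

/-- If `A₁, A₂` are symmetric zero-diagonal matrices over GF(2), each having a zero
column (the corresponding graphs have isolated vertices), then the GF(2) rank of
`A₁ ⊗ J + J ⊗ A₂` equals `rank A₁ + rank A₂`. -/
theorem rank_kroneckerSum_of_zero_columns {n₁ n₂ : Type*} [Fintype n₁] [Fintype n₂]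
    [DecidableEq n₁] [DecidableEq n₂]
    (A₁ : Matrix n₁ n₁ (ZMod 2)) (A₂ : Matrix n₂ n₂ (ZMod 2))
    (h₁symm : A₁.IsSymm) (h₁diag : ∀ i, A₁ i i = 0)
    (h₂symm : A₂.IsSymm) (h₂diag : ∀ i, A₂ i i = 0)
    (h₁col : ∃ j, ∀ i, A₁ i j = 0) (h₂col : ∃ j, ∀ i, A₂ i j = 0)
    (J₁ : Matrix n₁ n₁ (ZMod 2)) (hJ₁ : ∀ i j, J₁ i j = 1)
    (J₂ : Matrix n₂ n₂ (ZMod 2)) (hJ₂ : ∀ i j, J₂ i j = 1) :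
    (A₁ ⊗ₖ J₂ + J₁ ⊗ₖ A₂).rank = A₁.rank + A₂.rank := by
  obtain ⟨j₁, hj₁⟩ := h₁col
  obtain ⟨j₂, hj₂⟩ := h₂col
  haveI : Nonempty n₁ := ⟨j₁⟩
  haveI : Nonempty n₂ := ⟨j₂⟩
  set L₁ : ((n₁ → ZMod 2) →ₗ[ZMod 2] (n₁ × n₂ → ZMod 2)) :=
    LinearMap.funLeft (ZMod 2) (ZMod 2) Prod.fst with hL₁
  set L₂ : ((n₂ → ZMod 2) →ₗ[ZMod 2] (n₁ × n₂ → ZMod 2)) :=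
    LinearMap.funLeft (ZMod 2) (ZMod 2) Prod.snd with hL₂
  have hL₁inj : Function.Injective L₁ :=
    LinearMap.funLeft_injective_of_surjective _ _ _ Prod.fst_surjective
  have hL₂inj : Function.Injective L₂ :=
    LinearMap.funLeft_injective_of_surjective _ _ _ Prod.snd_surjective
  -- row j₁ of A₁ is zero, row j₂ of A₂ is zero
  have hr₁ : ∀ j, A₁ j₁ j = 0 := fun j => by
    rw [← h₁symm.apply]; exact hj₁ j
  -- key computation
  have key : ∀ u : n₁ × n₂ → ZMod 2,
      (A₁ ⊗ₖ J₂ + J₁ ⊗ₖ A₂).mulVec u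
        = L₁ (A₁.mulVec (fun j => ∑ k, u (j, k)))
          + L₂ (A₂.mulVec (fun k => ∑ j, u (j, k))) := by
    intro u
    funext i
    obtain ⟨i₁, i₂⟩ := i
    simp only [Matrix.mulVec, dotProduct, Matrix.add_apply, Matrix.kroneckerMap_apply,
      hJ₁, hJ₂, mul_one, one_mul, Pi.add_apply, hL₁, hL₂, LinearMap.funLeft_apply,
      add_mul, Finset.sum_add_distrib, Fintype.sum_prod_type, Finset.mul_sum]
    congr 1
    rw [Finset.sum_comm]
  -- range equality
  have hrange : LinearMap.range (A₁ ⊗ₖ J₂ + J₁ ⊗ₖ A₂).mulVecLin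
      = (LinearMap.range A₁.mulVecLin).map L₁ ⊔ (LinearMap.range A₂.mulVecLin).map L₂ := by
    apply le_antisymm
    · rintro x ⟨u, rfl⟩
      rw [Matrix.mulVecLin_apply, key u]
      exact Submodule.add_mem_sup
        ⟨_, ⟨_, rfl⟩, rfl⟩ ⟨_, ⟨_, rfl⟩, rfl⟩
    · rw [sup_le_iff]
      constructor
      · rintro x ⟨v, ⟨y, rfl⟩, rfl⟩
        refine ⟨fun p => if p.2 = j₂ then y p.1 else 0, ?_⟩
        rw [Matrix.mulVecLin_apply, key]
        have h2 : (A₂.mulVec (fun k => ∑ j : n₁, if k = j₂ then y j else 0)) = 0 := by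
          funext i
          simp only [Matrix.mulVec, dotProduct, Pi.zero_apply]
          exact Finset.sum_eq_zero fun k _ => by
            by_cases hk : k = j₂
            · subst hk; simp [hj₂ i]
            · simp [hk]
        have h1 : (fun j => ∑ k : n₂, if k = j₂ then y j else 0) = y := by
          funext j; simp
        rw [h1, h2, map_zero, add_zero, Matrix.mulVecLin_apply]
      · rintro x ⟨w, ⟨z, rfl⟩, rfl⟩
        refine ⟨fun p => if p.1 = j₁ then z p.2 else 0, ?_⟩
        rw [Matrix.mulVecLin_apply, key]
        have h1 : (A₁.mulVec (fun j => ∑ k : n₂, if j = j₁ then z k else 0)) = 0 := by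
          funext i
          simp only [Matrix.mulVec, dotProduct, Pi.zero_apply]
          exact Finset.sum_eq_zero fun j _ => by
            by_cases hjj : j = j₁
            · subst hjj; simp [hj₁ i]
            · simp [hjj]
        have h2 : (fun k => ∑ j : n₁, if j = j₁ then z k else 0) = z := by
          funext k; simp
        rw [h1, h2, map_zero, zero_add, Matrix.mulVecLin_apply]
  -- disjointness
  have hdisj : (LinearMap.range A₁.mulVecLin).map L₁ ⊓ (LinearMap.range A₂.mulVecLin).map L₂ = ⊥ := by
    rw [eq_bot_iff]
    rintro x ⟨⟨v, ⟨y, rfl⟩, rfl⟩, w, ⟨z, rfl⟩, hx⟩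
    have hv : (A₁.mulVecLin y) j₁ = 0 := by
      simp only [Matrix.mulVecLin_apply, Matrix.mulVec, dotProduct]
      exact Finset.sum_eq_zero fun j _ => by simp only [hr₁ j, zero_mul]
    have hw : ∀ i₂, (A₂.mulVecLin z) i₂ = 0 := by
      intro i₂
      have := congrFun hx (j₁, i₂)
      simp only [hL₁, hL₂, LinearMap.funLeft_apply] at this
      rw [this, hv]
    have hz : A₂.mulVecLin z = 0 := funext hw
    rw [← hx, hz, map_zero]
    exact Submodule.zero_mem ⊥
  -- finrank computation
  rw [Matrix.rank, Matrix.rank, Matrix.rank, hrange]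
  have e₁ := (Submodule.equivMapOfInjective L₁ hL₁inj (LinearMap.range A₁.mulVecLin)).finrank_eq
  have e₂ := (Submodule.equivMapOfInjective L₂ hL₂inj (LinearMap.range A₂.mulVecLin)).finrank_eq
  have := Submodule.finrank_sup_add_finrank_inf_eq
    ((LinearMap.range A₁.mulVecLin).map L₁) ((LinearMap.range A₂.mulVecLin).map L₂)
  rw [hdisj, finrank_bot, add_zero] at this
  rw [this, ← e₁, ← e₂]
end
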